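/- Let X be any k-dimensional simplicial complex on a finite vertex set V with Z_{k−1}(X;ℝ) ≠ {0} (the (k−1)-skeleton need not be complete). Then λ(X) ≤ h(X). -/

import Mathlib

open Finset

namespace HigherCheeger

variable {V : Type*} [DecidableEq V] [Fintype V] [LinearOrder V]

/-- An abstract simplicial complex: a family of finite subsets of `V`
closed under taking subsets. -/
def IsComplex (X : Finset (Finset V)) : Prop :=
  ∀ σ ∈ X, ∀ τ ⊆ σ, τ ∈ X

/-- `X` is `k`-dimensional: every face has at most `k+1` vertices
and some face has exactly `k+1` vertices. -/
def IsDim (X : Finset (Finset V)) (k : ℕ) : Prop :=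
  (∀ σ ∈ X, σ.card ≤ k + 1) ∧ ∃ σ ∈ X, σ.card = k + 1

/-- The faces of `X` of cardinality `c` (i.e. of dimension `c - 1`). -/
def faces (X : Finset (Finset V)) (c : ℕ) : Finset (Finset V) :=
  X.filter fun σ => σ.card = c

/-- `X` has complete `(k-1)`-skeleton: every subset of `V` of size at most `k` is a face. -/
def CompleteSkeleton (X : Finset (Finset V)) (k : ℕ) : Prop :=
  ∀ σ : Finset V, σ.card ≤ k → σ ∈ X

/-- The `k`-dimensional completion `K(X)`. -/
def completion (X : Finset (Finset V)) (k : ℕ) : Finset (Finset V) :=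
  X ∪ (Finset.univ.filter fun τ : Finset V => τ.card = k + 1 ∧ ∀ v ∈ τ, τ.erase v ∈ X)

/-- The complete `k`-dimensional complex `K_n^k` on the vertex set `V`. -/
def completeComplex (V : Type*) [DecidableEq V] [Fintype V] (k : ℕ) : Finset (Finset V) :=
  Finset.univ.filter fun σ : Finset V => σ.card ≤ k + 1

/-- The oriented incidence number `[τ:σ]` (with respect to the linear order on `V`):
`(-1)^j` if `σ = τ \ {v_j}` where `v_j` is the `j`-th smallest vertex of `τ`, and `0` otherwise. -/
def incidence (τ σ : Finset V) : ℝ :=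
  if σ ⊆ τ ∧ σ.card + 1 = τ.card then
    ∑ v ∈ τ \ σ, (-1 : ℝ) ^ (τ.filter fun w => w < v).card
  else 0

/-- The real coboundary operator `δ` applied to a cochain living on the faces of
cardinality `c`; the result lives on faces of cardinality `c + 1`. -/
def delta (X : Finset (Finset V)) (c : ℕ) (f : Finset V → ℝ) : Finset V → ℝ :=
  fun τ => ∑ σ ∈ faces X c, incidence τ σ * f σ

/-- The real boundary operator `∂` (the adjoint of `δ`) applied to a cochain living
on the faces of cardinality `c`; the result lives on faces of cardinality `c - 1`. -/
def bdry (X : Finset (Finset V)) (c : ℕ) (f : Finset V → ℝ) : Finset V → ℝ :=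
  fun σ => ∑ τ ∈ faces X c, incidence τ σ * f τ

/-- The inner product of two cochains on the faces of cardinality `c`. -/
def inn (X : Finset (Finset V)) (c : ℕ) (f g : Finset V → ℝ) : ℝ :=
  ∑ σ ∈ faces X c, f σ * g σ

/-- The upper Laplacian `L^up_{k-1} = ∂_k δ_{k-1}` acting on `(k-1)`-cochains
(functions on faces of cardinality `k`). -/
def lapUp (X : Finset (Finset V)) (k : ℕ) (f : Finset V → ℝ) : Finset V → ℝ :=
  bdry X (k + 1) (delta X k f)

/-- The lower Laplacian `L^down_{k-1} = δ_{k-2} ∂_{k-1}` acting on `(k-1)`-cochains. -/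
def lapDown (X : Finset (Finset V)) (k : ℕ) (f : Finset V → ℝ) : Finset V → ℝ :=
  delta X (k - 1) (bdry X k f)

/-- `f ∈ Z_{k-1}(X;ℝ) = ker ∂_{k-1}`. -/
def IsCycle (X : Finset (Finset V)) (k : ℕ) (f : Finset V → ℝ) : Prop :=
  ∀ σ : Finset V, bdry X k f σ = 0

/-- `f ∈ B^{k-1}(X;ℝ) = im δ_{k-2}` (as a cochain, i.e. on the `(k-1)`-faces). -/
def IsCobdry (X : Finset (Finset V)) (k : ℕ) (f : Finset V → ℝ) : Prop :=
  ∃ g : Finset V → ℝ, ∀ σ ∈ faces X k, f σ = delta X (k - 1) g σ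

/-- The spectral gap `λ(X)`: the minimum of the Rayleigh quotient
`⟨L^up_{k-1}(X) f, f⟩ / ⟨f, f⟩` over nonzero `f ∈ Z_{k-1}(X;ℝ)`. -/
noncomputable def spectralGap (X : Finset (Finset V)) (k : ℕ) : ℝ :=
  sInf {r : ℝ | ∃ f : Finset V → ℝ, IsCycle X k f ∧ inn X k f f ≠ 0 ∧
    r = inn X k (lapUp X k f) f / inn X k f f}

/-- A partition of `V` into `m` (nonempty) parts. -/
def IsPartition {m : ℕ} (A : Fin m → Finset V) : Prop :=
  (∀ i, (A i).Nonempty) ∧ ∀ v : V, ∃! i, v ∈ A i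

/-- The linear order on `V` is adapted to the family of parts `A`. -/
def OrderAdapted {m : ℕ} (A : Fin m → Finset V) : Prop :=
  ∀ i j : Fin m, i < j → ∀ v ∈ A i, ∀ w ∈ A j, v < w

/-- `F(A_0,…,A_k)`: the `k`-faces of `X` with exactly one vertex in each part. -/
def Fset (X : Finset (Finset V)) (k : ℕ) (A : Fin (k + 1) → Finset V) : Finset (Finset V) :=
  (faces X (k + 1)).filter fun τ => ∀ i, (τ ∩ A i).card = 1

/-- `F^∂(A_0,…,A_k)`: the `(k+1)`-element members of `K(X)` with exactly one vertex
in each part. -/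
def Fpar (X : Finset (Finset V)) (k : ℕ) (A : Fin (k + 1) → Finset V) : Finset (Finset V) :=
  (faces (completion X k) (k + 1)).filter fun τ => ∀ i, (τ ∩ A i).card = 1

/-- The value `|V|·|F(A_0,…,A_k)| / |F^∂(A_0,…,A_k)|` of a partition
(`⊤` if the denominator is `0`). -/
noncomputable def cheegerVal (X : Finset (Finset V)) (k : ℕ) (A : Fin (k + 1) → Finset V) :
    EReal :=
  if (Fpar X k A).card = 0 then ⊤
  else (((Fintype.card V * (Fset X k A).card : ℝ) / ((Fpar X k A).card : ℝ) : ℝ) : EReal)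

/-- The Cheeger constant `h(X)`. -/
noncomputable def cheeger (X : Finset (Finset V)) (k : ℕ) : EReal :=
  sInf {r : EReal | ∃ A : Fin (k + 1) → Finset V, IsPartition A ∧ r = cheegerVal X k A}

/-- `d(σ)`: the number of members of `F^∂(A_0,…,A_k)` containing `σ`. -/
def degPar (X : Finset (Finset V)) (k : ℕ) (A : Fin (k + 1) → Finset V) (σ : Finset V) : ℕ :=
  ((Fpar X k A).filter fun τ => σ ⊆ τ).card

/-- `C(X)` (with respect to the partition `A`):
the maximum over `τ ∈ F^∂(A_0,…,A_k)` of `∑_{v ∈ τ} d(τ \ {v})`. -/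
def Cconst (X : Finset (Finset V)) (k : ℕ) (A : Fin (k + 1) → Finset V) : ℕ :=
  (Fpar X k A).sup fun τ => ∑ v ∈ τ, degPar X k A (τ.erase v)

/-- The cochain associated to a partition `A`: `σ ↦ (-1)^l·|A_l|` if `A_l` is the unique
part disjoint from `σ`, and `0` otherwise. -/
def assocCochain {k : ℕ} (A : Fin (k + 1) → Finset V) (σ : Finset V) : ℝ :=
  if (Finset.univ.filter fun l => σ ∩ A l = ∅).card = 1 then
    ∑ l ∈ Finset.univ.filter fun l => σ ∩ A l = ∅, (-1 : ℝ) ^ (l : ℕ) * ((A l).card : ℝ)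
  else 0

/-- The `Z₂`-coboundary: a `(c-1)`-cochain `f` is sent to
`τ ↦ ∑_{v ∈ τ} f (τ \ {v})`. -/
def deltaZ2 (f : Finset V → ZMod 2) (τ : Finset V) : ZMod 2 :=
  ∑ v ∈ τ, f (τ.erase v)

/-- The support of the `Z₂`-coboundary of `f` in `X`: the faces of `X` of cardinality
`k + 1` on which the `Z₂`-coboundary of `f` is nonzero.  Its cardinality is `|δ_X f|`. -/
def suppDelta (X : Finset (Finset V)) (k : ℕ) (f : Finset V → ZMod 2) : Finset (Finset V) :=
  (faces X (k + 1)).filter fun τ => deltaZ2 f τ ≠ 0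

/-- `F(A_0,…,A_{k-1})`: the `(k-1)`-faces of `X` with exactly one vertex in each of
the `k` parts. -/
def FsetLow (X : Finset (Finset V)) (k : ℕ) (A : Fin k → Finset V) : Finset (Finset V) :=
  (faces X k).filter fun σ => ∀ i, (σ ∩ A i).card = 1

/-- The Cheeger-type constant `h'(X)`. -/
noncomputable def cheeger' (X : Finset (Finset V)) (k : ℕ) : EReal :=
  sInf {r : EReal | ∃ (A : Fin k → Finset V) (f : Finset V → ZMod 2),
    IsPartition A ∧ (∀ σ, f σ ≠ 0 → σ ∈ FsetLow X k A) ∧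
    r = if (suppDelta (completion X k) k f).card = 0 then (⊤ : EReal)
        else (((Fintype.card V * (suppDelta X k f).card : ℝ) /
              ((suppDelta (completion X k) k f).card : ℝ) : ℝ) : EReal)}

/-- The Hamming norm of a `Z₂`-cochain on the faces of cardinality `c`. -/
def hamming (X : Finset (Finset V)) (c : ℕ) (f : Finset V → ZMod 2) : ℕ :=
  ((faces X c).filter fun σ => f σ ≠ 0).card

/-- `|[f]|`: the minimum Hamming norm of `f + δ_X g` over `g ∈ C^{k-2}(X;Z₂)`. -/
noncomputable def normClass (X : Finset (Finset V)) (k : ℕ) (f : Finset V → ZMod 2) : ℕ :=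
  sInf {m : ℕ | ∃ g : Finset V → ZMod 2, m = hamming X k fun σ => f σ + deltaZ2 g σ}

/-- The coboundary expansion `φ(X) = min_f |δ_X f| / |[f]|` (quotients with denominator
`0` are `∞`). -/
noncomputable def phi (X : Finset (Finset V)) (k : ℕ) : EReal :=
  sInf {r : EReal | ∃ f : Finset V → ZMod 2,
    r = if normClass X k f = 0 then (⊤ : EReal)
        else ((((suppDelta X k f).card : ℝ) / (normClass X k f : ℝ) : ℝ) : EReal)}

/-- `h̃(X) = min_f |V|·|δ_X f| / |δ_{K(X)} f|` (quotients with denominator `0` are `∞`). -/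
noncomputable def htilde (X : Finset (Finset V)) (k : ℕ) : EReal :=
  sInf {r : EReal | ∃ f : Finset V → ZMod 2,
    r = if (suppDelta (completion X k) k f).card = 0 then (⊤ : EReal)
        else (((Fintype.card V * (suppDelta X k f).card : ℝ) /
              ((suppDelta (completion X k) k f).card : ℝ) : ℝ) : EReal)}

section Aux
set_option linter.unusedSectionVars false

variable {V : Type*} [DecidableEq V] [Fintype V] [LinearOrder V]

lemma negpow_congr {a b : ℕ} (h : a % 2 = b % 2) : (-1 : ℝ) ^ a = (-1) ^ b := by
  have ha := Nat.div_add_mod a 2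
  have hb := Nat.div_add_mod b 2
  calc (-1 : ℝ) ^ a = (-1) ^ (2 * (a / 2) + a % 2) := by rw [ha]
    _ = (-1) ^ (a % 2) := by
        rw [pow_add, pow_mul, neg_one_sq, one_pow, one_mul]
    _ = (-1) ^ (b % 2) := by rw [h]
    _ = (-1) ^ (2 * (b / 2) + b % 2) := by
        rw [pow_add, pow_mul, neg_one_sq, one_pow, one_mul]
    _ = (-1) ^ b := by rw [hb]

lemma incidence_erase {τ : Finset V} {v : V} (hv : v ∈ τ) :
    incidence τ (τ.erase v) = (-1 : ℝ) ^ ((τ.filter fun w => w < v).card) := by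
  have hsub : τ.erase v ⊆ τ := Finset.erase_subset _ _
  have hcard : (τ.erase v).card + 1 = τ.card := by
    rw [Finset.card_erase_of_mem hv]
    exact Nat.succ_pred_eq_of_pos (Finset.card_pos.mpr ⟨v, hv⟩)
  have hdiff : τ \ τ.erase v = {v} := by
    ext x
    simp only [Finset.mem_sdiff, Finset.mem_erase, Finset.mem_singleton]
    constructor
    · rintro ⟨hx, h2⟩
      by_contra hne
      exact h2 ⟨hne, hx⟩
    · rintro rfl; exact ⟨hv, fun h => h.1 rfl⟩
  rw [incidence, if_pos ⟨hsub, hcard⟩, hdiff, Finset.sum_singleton]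

lemma incidence_eq_zero {τ σ : Finset V} (h : ¬(σ ⊆ τ ∧ σ.card + 1 = τ.card)) :
    incidence τ σ = 0 := by rw [incidence, if_neg h]

lemma incidence_erase_sq {τ : Finset V} {v : V} (hv : v ∈ τ) :
    incidence τ (τ.erase v) * incidence τ (τ.erase v) = 1 := by
  rw [incidence_erase hv, ← pow_add, ← two_mul, pow_mul, neg_one_sq, one_pow]

lemma exists_erase {σ τ : Finset V} (hsub : σ ⊆ τ) (hc : σ.card + 1 = τ.card) :
    ∃ v ∈ τ, σ = τ.erase v := by
  have hdc : (τ \ σ).card = 1 := by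
    rw [Finset.card_sdiff_of_subset hsub]; omega
  obtain ⟨v, hveq⟩ := Finset.card_eq_one.mp hdc
  have hv : v ∈ τ \ σ := by rw [hveq]; exact Finset.mem_singleton_self v
  refine ⟨v, (Finset.mem_sdiff.mp hv).1, ?_⟩
  apply Finset.eq_of_subset_of_card_le
  · intro x hx
    refine Finset.mem_erase.mpr ⟨?_, hsub hx⟩
    rintro rfl
    exact (Finset.mem_sdiff.mp hv).2 hx
  · rw [Finset.card_erase_of_mem (Finset.mem_sdiff.mp hv).1]; omega

/-- reduce a sum over `faces X c` against `incidence τ ·` to a sum over erasures. -/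
lemma sum_faces_eq_sum_erase (X : Finset (Finset V)) {c : ℕ} (f : Finset V → ℝ)
    {τ : Finset V} (hτc : τ.card = c + 1) (hfac : ∀ v ∈ τ, τ.erase v ∈ X) :
    ∑ σ ∈ faces X c, incidence τ σ * f σ
      = ∑ v ∈ τ, incidence τ (τ.erase v) * f (τ.erase v) := by
  have hinj : ∀ v ∈ τ, ∀ w ∈ τ, τ.erase v = τ.erase w → v = w := by
    intro v hv w hw h
    by_contra hne
    have : v ∈ τ.erase w := Finset.mem_erase.mpr ⟨hne, hv⟩
    rw [← h] at this
    exact (Finset.mem_erase.mp this).1 rfl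
  rw [← Finset.sum_image (f := fun σ => incidence τ σ * f σ) (g := fun v => τ.erase v) hinj]
  symm
  apply Finset.sum_subset
  · intro σ hσ
    obtain ⟨v, hv, rfl⟩ := Finset.mem_image.mp hσ
    refine Finset.mem_filter.mpr ⟨hfac v hv, ?_⟩
    rw [Finset.card_erase_of_mem hv, hτc]; omega
  · intro σ hσ hnot
    rcases eq_or_ne (incidence τ σ) 0 with h0 | h0
    · rw [h0, zero_mul]
    · exfalso
      have hc : σ ⊆ τ ∧ σ.card + 1 = τ.card := by
        by_contra h; exact h0 (incidence_eq_zero h)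
      obtain ⟨v, hv, rfl⟩ := exists_erase hc.1 hc.2
      exact hnot (Finset.mem_image_of_mem _ hv)


lemma pair_cancel {τ : Finset V} {u w : V} (hu : u ∈ τ) (hw : w ∈ τ) (hlt : u < w) :
    incidence τ (τ.erase u) * incidence (τ.erase u) ((τ.erase u).erase w)
      + incidence τ (τ.erase w) * incidence (τ.erase w) ((τ.erase w).erase u) = 0 := by
  have hne : u ≠ w := ne_of_lt hlt
  have hwu : w ∈ τ.erase u := Finset.mem_erase.mpr ⟨hne.symm, hw⟩
  have huw : u ∈ τ.erase w := Finset.mem_erase.mpr ⟨hne, hu⟩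
  rw [incidence_erase hu, incidence_erase hw, incidence_erase hwu, incidence_erase huw]
  have h1 : (τ.erase u).filter (fun x => x < w) = (τ.filter fun x => x < w).erase u := by
    rw [Finset.filter_erase]
  have h2 : (τ.erase w).filter (fun x => x < u) = τ.filter fun x => x < u := by
    rw [Finset.filter_erase, Finset.erase_eq_of_notMem]
    intro hmem
    exact absurd (Finset.mem_filter.mp hmem).2 (not_lt.mpr hlt.le)
  have humem : u ∈ τ.filter fun x => x < w := Finset.mem_filter.mpr ⟨hu, hlt⟩
  have hQ : 0 < (τ.filter fun x => x < w).card := Finset.card_pos.mpr ⟨u, humem⟩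
  rw [h1, h2, Finset.card_erase_of_mem humem]
  set P := (τ.filter fun x => x < u).card
  set Q := (τ.filter fun x => x < w).card
  obtain ⟨q, hq⟩ : ∃ q, Q = q + 1 := ⟨Q - 1, by omega⟩
  rw [hq, Nat.add_sub_cancel, pow_succ]
  ring

lemma dd0 (τ ρ : Finset V) :
    ∑ v ∈ τ, incidence τ (τ.erase v) * incidence (τ.erase v) ρ = 0 := by
  by_cases hρ : ρ ⊆ τ ∧ ρ.card + 2 = τ.card
  · -- exactly two elements in τ \ ρ
    have hdc : (τ \ ρ).card = 2 := by rw [Finset.card_sdiff_of_subset hρ.1]; omega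
    obtain ⟨u, w, huw, hset⟩ := Finset.card_eq_two.mp hdc
    have humem : u ∈ τ \ ρ := by rw [hset]; exact Finset.mem_insert_self _ _
    have hwmem : w ∈ τ \ ρ := by rw [hset]; simp
    have hu : u ∈ τ := (Finset.mem_sdiff.mp humem).1
    have hw : w ∈ τ := (Finset.mem_sdiff.mp hwmem).1
    have hρu : ρ = (τ.erase u).erase w := by
      have : ρ = τ \ (τ \ ρ) := (Finset.sdiff_sdiff_eq_self hρ.1).symm
      rw [this, hset]
      ext x
      simp only [Finset.mem_sdiff, Finset.mem_insert, Finset.mem_singleton,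
        Finset.mem_erase]
      tauto
    have hρw : ρ = (τ.erase w).erase u := by
      rw [hρu, Finset.erase_right_comm]
    have hsum : ∑ v ∈ τ, incidence τ (τ.erase v) * incidence (τ.erase v) ρ
        = ∑ v ∈ ({u, w} : Finset V), incidence τ (τ.erase v) * incidence (τ.erase v) ρ := by
      symm
      apply Finset.sum_subset
      · intro x hx
        rcases Finset.mem_insert.mp hx with rfl | hx
        · exact hu
        · rw [Finset.mem_singleton.mp hx]; exact hw
      · intro v hv hnv
        have hvρ : v ∈ ρ := by
          by_contra hcon
          have hvd : v ∈ τ \ ρ := Finset.mem_sdiff.mpr ⟨hv, hcon⟩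
          rw [hset] at hvd
          exact hnv hvd
        have : incidence (τ.erase v) ρ = 0 := by
          apply incidence_eq_zero
          rintro ⟨hsub, -⟩
          exact (Finset.mem_erase.mp (hsub hvρ)).1 rfl
        rw [this, mul_zero]
    rw [hsum, Finset.sum_pair huw]
    rcases huw.lt_or_gt with hlt | hlt
    · have := pair_cancel hu hw hlt
      rw [← hρu, ← hρw] at this
      exact this
    · have := pair_cancel hw hu hlt
      rw [← hρw, ← hρu] at this
      linarith [this]
  · -- all terms vanish
    apply Finset.sum_eq_zero
    intro v hv
    rcases eq_or_ne (incidence (τ.erase v) ρ) 0 with h0 | h0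
    · rw [h0, mul_zero]
    · exfalso
      have hc : ρ ⊆ τ.erase v ∧ ρ.card + 1 = (τ.erase v).card := by
        by_contra h; exact h0 (incidence_eq_zero h)
      have : ρ.card + 2 = τ.card := by
        have := hc.2
        rw [Finset.card_erase_of_mem hv] at this
        have hpos : 0 < τ.card := Finset.card_pos.mpr ⟨v, hv⟩
        omega
      exact hρ ⟨hc.1.trans (Finset.erase_subset _ _), this⟩

end Aux
section Inv
set_option linter.unusedSectionVars false

variable {V : Type*} [DecidableEq V] [Fintype V] [LinearOrder V]

/-- Number of inversions of `p` on `σ` (w.r.t. the linear order of `V`). -/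
def invCount (p : V → ℕ) (σ : Finset V) : ℕ :=
  ∑ w ∈ σ, (σ.filter fun x => x < w ∧ p w < p x).card

/-- The sign-corrected test cochain. -/
noncomputable def gfun (p : V → ℕ) (a : ℕ → ℝ) (k : ℕ) (σ : Finset V) : ℝ :=
  if σ.card = k ∧ (σ.image p).card = k then
    (-1) ^ (invCount p σ) * ∑ m ∈ Finset.range (k+1) \ σ.image p, (-1 : ℝ) ^ m * a m
  else 0

lemma negpow_opp {e f : ℕ} (h : e % 2 ≠ f % 2) : (-1 : ℝ) ^ e = -(-1 : ℝ) ^ f := by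
  have : e % 2 = (f + 1) % 2 := by omega
  rw [negpow_congr this, pow_succ]; ring

lemma invCount_erase (p : V → ℕ) {τ : Finset V} {v : V} (hv : v ∈ τ) :
    invCount p τ = invCount p (τ.erase v)
      + (τ.filter fun x => x < v ∧ p v < p x).card
      + (τ.filter fun x => v < x ∧ p x < p v).card := by
  have hins : insert v (τ.erase v) = τ := Finset.insert_erase hv
  unfold invCount
  rw [← Finset.add_sum_erase _ _ hv]
  have h1 : ∀ w ∈ τ.erase v,
      (τ.filter fun x => x < w ∧ p w < p x).card
        = ((τ.erase v).filter fun x => x < w ∧ p w < p x).card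
          + (if v < w ∧ p w < p v then 1 else 0) := by
    intro w hw
    nth_rewrite 1 [← hins]
    rw [Finset.filter_insert]
    split_ifs with h
    · rw [Finset.card_insert_of_notMem
        (fun hmem => (Finset.mem_erase.mp (Finset.mem_of_mem_filter _ hmem)).1 rfl)]
    · rfl
  rw [Finset.sum_congr rfl h1, Finset.sum_add_distrib, ← Finset.card_filter]
  have h2 : (τ.erase v).filter (fun w => v < w ∧ p w < p v)
      = τ.filter fun w => v < w ∧ p w < p v := by
    rw [Finset.filter_erase, Finset.erase_eq_of_notMem]
    intro hmem
    exact absurd (Finset.mem_filter.mp hmem).2.1 (lt_irrefl v)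
  rw [h2]
  omega

lemma card_filter_tri (s : Finset V) (f : V → ℕ) (n : ℕ) :
    s.card = (s.filter fun x => f x < n).card + (s.filter fun x => n < f x).card
      + (s.filter fun x => f x = n).card := by
  rw [Finset.card_filter, Finset.card_filter, Finset.card_filter,
    ← Finset.sum_add_distrib, ← Finset.sum_add_distrib, Finset.card_eq_sum_ones]
  apply Finset.sum_congr rfl
  intro x _
  split_ifs <;> omega

/-- trichotomy split of a filter along comparison with a fixed vertex. -/
lemma card_filter_tri' (s : Finset V) (Q : V → Prop) [DecidablePred Q] (v : V) (hv : ¬ Q v) :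
    (s.filter Q).card = (s.filter fun x => x < v ∧ Q x).card
      + (s.filter fun x => v < x ∧ Q x).card := by
  rw [Finset.card_filter, Finset.card_filter, Finset.card_filter, ← Finset.sum_add_distrib]
  apply Finset.sum_congr rfl
  intro x _
  by_cases hq : Q x
  · rcases lt_trichotomy x v with h | h | h
    · rw [if_pos hq, if_pos ⟨h, hq⟩, if_neg (fun hc => absurd h (not_lt.mpr hc.1.le))]
    · exact absurd hq (h ▸ hv)
    · rw [if_pos hq, if_neg (fun hc => absurd h (not_lt.mpr hc.1.le)), if_pos ⟨h, hq⟩]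
  · rw [if_neg hq, if_neg (fun hc => hq hc.2), if_neg (fun hc => hq hc.2)]

lemma image_erase_injOn (p : V → ℕ) {τ : Finset V} (hinj : Set.InjOn p ↑τ) {v : V}
    (hv : v ∈ τ) : (τ.erase v).image p = (τ.image p).erase (p v) := by
  ext m
  constructor
  · intro hm
    obtain ⟨x, hx, rfl⟩ := Finset.mem_image.mp hm
    obtain ⟨hxv, hxτ⟩ := Finset.mem_erase.mp hx
    exact Finset.mem_erase.mpr ⟨fun h => hxv (hinj hxτ hv h), Finset.mem_image_of_mem p hxτ⟩
  · intro hm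
    obtain ⟨hm1, hm2⟩ := Finset.mem_erase.mp hm
    obtain ⟨x, hxτ, rfl⟩ := Finset.mem_image.mp hm2
    exact Finset.mem_image_of_mem p (Finset.mem_erase.mpr ⟨fun h => hm1 (congrArg p h), hxτ⟩)

lemma image_eq_range {k : ℕ} (p : V → ℕ) (hp : ∀ x : V, p x < k + 1) {τ : Finset V}
    (himg : (τ.image p).card = k + 1) : τ.image p = Finset.range (k + 1) := by
  apply Finset.eq_of_subset_of_card_le
  · intro m hm
    obtain ⟨x, _, rfl⟩ := Finset.mem_image.mp hm
    exact Finset.mem_range.mpr (hp x)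
  · rw [Finset.card_range, himg]

end Inv
section L4
set_option linter.unusedSectionVars false
set_option maxHeartbeats 1000000

variable {V : Type*} [DecidableEq V] [Fintype V] [LinearOrder V]

lemma card_filter_lt_of_image (p : V → ℕ) {τ : Finset V} (hinj : Set.InjOn p ↑τ) (n : ℕ) :
    (τ.filter fun x => p x < n).card = ((τ.image p).filter fun m => m < n).card := by
  rw [Finset.filter_image]
  exact (Finset.card_image_of_injOn
    (hinj.mono (Finset.coe_subset.mpr (Finset.filter_subset _ _)))).symm

lemma card_filter_tri'' (s : Finset V) (p : V → ℕ) (v : V) :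
    (s.filter fun x => p x < p v).card = (s.filter fun x => x < v ∧ p x < p v).card
      + (s.filter fun x => v < x ∧ p x < p v).card :=
  card_filter_tri' s (fun x => p x < p v) v (lt_irrefl (p v))

lemma L4case2 (p : V → ℕ) (a : ℕ → ℝ) (k : ℕ)
    {τ : Finset V} (hτ : τ.card = k + 1) (himk : (τ.image p).card = k)
    {u w : V} (hu : u ∈ τ) (hw : w ∈ τ) (hlt : u < w) (hpuw : p u = p w) :
    ∑ v ∈ τ, incidence τ (τ.erase v) * gfun p a k (τ.erase v) = 0 := by
  have hne : u ≠ w := ne_of_lt hlt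
  have hwu : w ∈ τ.erase u := Finset.mem_erase.mpr ⟨hne.symm, hw⟩
  have huw : u ∈ τ.erase w := Finset.mem_erase.mpr ⟨hne, hu⟩
  have him_u : (τ.erase u).image p = τ.image p := by
    apply Finset.Subset.antisymm (Finset.image_subset_image (Finset.erase_subset _ _))
    intro m hm
    obtain ⟨x, hx, rfl⟩ := Finset.mem_image.mp hm
    by_cases hxu : x = u
    · exact Finset.mem_image.mpr ⟨w, hwu, by rw [← hpuw, hxu]⟩
    · exact Finset.mem_image.mpr ⟨x, Finset.mem_erase.mpr ⟨hxu, hx⟩, rfl⟩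
  have him_w : (τ.erase w).image p = τ.image p := by
    apply Finset.Subset.antisymm (Finset.image_subset_image (Finset.erase_subset _ _))
    intro m hm
    obtain ⟨x, hx, rfl⟩ := Finset.mem_image.mp hm
    by_cases hxw : x = w
    · exact Finset.mem_image.mpr ⟨u, huw, by rw [hpuw, hxw]⟩
    · exact Finset.mem_image.mpr ⟨x, Finset.mem_erase.mpr ⟨hxw, hx⟩, rfl⟩
  have hcard_eu : (τ.erase u).card = k := by rw [Finset.card_erase_of_mem hu, hτ]; omega
  have hcard_ew : (τ.erase w).card = k := by rw [Finset.card_erase_of_mem hw, hτ]; omega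
  have hinj_u : Set.InjOn p ↑(τ.erase u) := by
    rw [← Finset.card_image_iff, him_u, himk, hcard_eu]
  have hinj_w : Set.InjOn p ↑(τ.erase w) := by
    rw [← Finset.card_image_iff, him_w, himk, hcard_ew]
  have hfib : ∀ x ∈ τ, p x = p u → x = u ∨ x = w := by
    intro x hx hpx
    by_cases hxw : x = w
    · right; exact hxw
    · left
      exact hinj_w (Finset.mem_coe.mpr (Finset.mem_erase.mpr ⟨hxw, hx⟩))
        (Finset.mem_coe.mpr huw) hpx
  -- reduce to the pair {u, w}
  have hred : ∑ v ∈ τ, incidence τ (τ.erase v) * gfun p a k (τ.erase v)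
      = ∑ v ∈ ({u, w} : Finset V), incidence τ (τ.erase v) * gfun p a k (τ.erase v) := by
    symm
    apply Finset.sum_subset
    · intro x hx
      rcases Finset.mem_insert.mp hx with rfl | hx
      · exact hu
      · rw [Finset.mem_singleton.mp hx]; exact hw
    · intro v hv hnv
      have hvu : v ≠ u := fun h => hnv (by rw [h]; exact Finset.mem_insert_self _ _)
      have hvw : v ≠ w := fun h => hnv (by rw [h]; simp)
      have hzero : gfun p a k (τ.erase v) = 0 := by
        rw [gfun, if_neg]
        rintro ⟨hc1, hc2⟩
        have hinj_v : Set.InjOn p ↑(τ.erase v) := by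
          rw [← Finset.card_image_iff, hc2, hc1]
        have h1 : u ∈ τ.erase v := Finset.mem_erase.mpr ⟨fun h => hvu h.symm, hu⟩
        have h2 : w ∈ τ.erase v := Finset.mem_erase.mpr ⟨fun h => hvw h.symm, hw⟩
        exact hne (hinj_v (Finset.mem_coe.mpr h1) (Finset.mem_coe.mpr h2) hpuw)
      rw [hzero, mul_zero]
  rw [hred, Finset.sum_pair hne]
  -- evaluate the two remaining terms
  set S : ℝ := ∑ m ∈ Finset.range (k+1) \ τ.image p, (-1 : ℝ) ^ m * a m with hS
  have hgu : gfun p a k (τ.erase u) = (-1 : ℝ) ^ (invCount p (τ.erase u)) * S := by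
    rw [gfun, if_pos ⟨hcard_eu, by rw [him_u, himk]⟩, him_u]
  have hgw : gfun p a k (τ.erase w) = (-1 : ℝ) ^ (invCount p (τ.erase w)) * S := by
    rw [gfun, if_pos ⟨hcard_ew, by rw [him_w, himk]⟩, him_w]
  rw [hgu, hgw, incidence_erase hu, incidence_erase hw]
  -- parity bookkeeping
  have hieu := invCount_erase p hu
  have hiew := invCount_erase p hw
  have hposu := card_filter_tri (τ.filter fun x => x < u) p (p u)
  have hposw := card_filter_tri (τ.filter fun x => x < w) p (p w)
  simp only [Finset.filter_filter] at hposu hposw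
  have hcu := card_filter_tri'' τ p u
  have hcw := card_filter_tri'' τ p w
  have hcuw : (τ.filter fun x => p x < p u).card = (τ.filter fun x => p x < p w).card := by
    simp only [hpuw]
  have hMu : (τ.filter fun x => x < u ∧ p x = p u).card = 0 := by
    rw [Finset.card_eq_zero]
    apply Finset.filter_false_of_mem
    rintro x hx ⟨hxlt, hxp⟩
    rcases hfib x hx hxp with rfl | rfl
    · exact absurd hxlt (lt_irrefl x)
    · exact absurd (hxlt.trans hlt) (lt_irrefl x)
  have hMw : (τ.filter fun x => x < w ∧ p x = p w).card = 1 := by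
    rw [Finset.card_eq_one]
    refine ⟨u, ?_⟩
    ext x
    simp only [Finset.mem_filter, Finset.mem_singleton]
    constructor
    · rintro ⟨hx, hxlt, hxp⟩
      rcases hfib x hx (hxp.trans hpuw.symm) with rfl | rfl
      · rfl
      · exact absurd hxlt (lt_irrefl x)
    · rintro rfl
      exact ⟨hu, hlt, hpuw⟩
  have hpar : ((τ.filter fun x => x < u).card + invCount p (τ.erase u)) % 2
      ≠ ((τ.filter fun x => x < w).card + invCount p (τ.erase w)) % 2 := by
    omega
  have hkey : (-1 : ℝ) ^ ((τ.filter fun x => x < u).card) * (-1 : ℝ) ^ (invCount p (τ.erase u))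
      = -((-1 : ℝ) ^ ((τ.filter fun x => x < w).card) * (-1 : ℝ) ^ (invCount p (τ.erase w))) := by
    rw [← pow_add, ← pow_add, negpow_opp hpar]
  linear_combination S * hkey

lemma L4 (p : V → ℕ) (a : ℕ → ℝ) (k : ℕ) (hp : ∀ x : V, p x < k + 1)
    {τ : Finset V} (hτ : τ.card = k + 1) :
    ∑ v ∈ τ, incidence τ (τ.erase v) * gfun p a k (τ.erase v)
      = if (τ.image p).card = k + 1 then
          (-1 : ℝ) ^ invCount p τ * ∑ m ∈ Finset.range (k + 1), a m
        else 0 := by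
  by_cases himg : (τ.image p).card = k + 1
  · rw [if_pos himg]
    have hinj : Set.InjOn p ↑τ := by
      rw [← Finset.card_image_iff, himg, hτ]
    have hrange : τ.image p = Finset.range (k+1) := image_eq_range p hp himg
    have hterm : ∀ v ∈ τ, incidence τ (τ.erase v) * gfun p a k (τ.erase v)
        = (-1 : ℝ) ^ invCount p τ * a (p v) := by
      intro v hv
      have hcard_e : (τ.erase v).card = k := by rw [Finset.card_erase_of_mem hv, hτ]; omega
      have him_e : (τ.erase v).image p = (Finset.range (k+1)).erase (p v) := by
        rw [image_erase_injOn p hinj hv, hrange]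
      have hmiss : Finset.range (k+1) \ (τ.erase v).image p = {p v} := by
        rw [him_e]
        ext x
        simp only [Finset.mem_sdiff, Finset.mem_erase, Finset.mem_singleton, Finset.mem_range]
        constructor
        · rintro ⟨h1, h2⟩; by_contra hne; exact h2 ⟨hne, h1⟩
        · rintro rfl; exact ⟨hp v, fun h => h.1 rfl⟩
      have him_ec : ((τ.erase v).image p).card = k := by
        rw [him_e, Finset.card_erase_of_mem (Finset.mem_range.mpr (hp v)), Finset.card_range]
        omega
      rw [gfun, if_pos ⟨hcard_e, him_ec⟩, hmiss, Finset.sum_singleton, incidence_erase hv]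
      -- parity bookkeeping
      have hie := invCount_erase p hv
      have hpos := card_filter_tri (τ.filter fun x => x < v) p (p v)
      simp only [Finset.filter_filter] at hpos
      have hcv := card_filter_tri'' τ p v
      have hM : (τ.filter fun x => x < v ∧ p x = p v).card = 0 := by
        rw [Finset.card_eq_zero]
        apply Finset.filter_false_of_mem
        rintro x hx ⟨hxlt, hxp⟩
        exact absurd (hinj (Finset.mem_coe.mpr hx) (Finset.mem_coe.mpr hv) hxp)
          (ne_of_lt hxlt)
      have hcval : (τ.filter fun x => p x < p v).card = p v := by
        rw [card_filter_lt_of_image p hinj, hrange]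
        have : ((Finset.range (k+1)).filter fun m => m < p v) = Finset.range (p v) := by
          ext m
          simp only [Finset.mem_filter, Finset.mem_range]
          constructor
          · exact fun h => h.2
          · exact fun h => ⟨h.trans (hp v), h⟩
        rw [this, Finset.card_range]
      have hsgn : (-1 : ℝ) ^ ((τ.filter fun x => x < v).card)
          * (-1 : ℝ) ^ (invCount p (τ.erase v)) * (-1 : ℝ) ^ (p v)
          = (-1 : ℝ) ^ invCount p τ := by
        rw [← pow_add, ← pow_add]
        exact negpow_congr (by omega)
      rw [← hsgn]
      ring
    rw [Finset.sum_congr rfl hterm, ← Finset.mul_sum]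
    congr 1
    rw [← hrange]
    exact (Finset.sum_image (fun x hx y hy h =>
      hinj (Finset.mem_coe.mpr hx) (Finset.mem_coe.mpr hy) h)).symm
  · rw [if_neg himg]
    have himgle : (τ.image p).card ≤ k := by
      have h1 := Finset.card_image_le (s := τ) (f := p)
      omega
    by_cases himk : (τ.image p).card = k
    · obtain ⟨u, hu, w, hw, hune, hpuw⟩ :
          ∃ u ∈ τ, ∃ w ∈ τ, u ≠ w ∧ p u = p w := by
        have hlt : (τ.image p).card < τ.card := by omega
        exact Finset.exists_ne_map_eq_of_card_lt_of_maps_to hlt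
          (fun x hx => Finset.mem_image_of_mem p hx)
      rcases hune.lt_or_gt with h | h
      · exact L4case2 p a k hτ himk hu hw h hpuw
      · exact L4case2 p a k hτ himk hw hu h hpuw.symm
    · apply Finset.sum_eq_zero
      intro v hv
      have h1 : (τ.erase v).image p ⊆ τ.image p :=
        Finset.image_subset_image (Finset.erase_subset _ _)
      have h2 := Finset.card_le_card h1
      rw [gfun, if_neg, mul_zero]
      rintro ⟨-, hc⟩
      omega

end L4
section Proj
set_option linter.unusedSectionVars false
set_option maxHeartbeats 1000000

variable {V : Type*} [DecidableEq V] [Fintype V] [LinearOrder V]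

/-- indicator-on-faces version of `incidence · ρ`, as a vector in Euclidean space. -/
noncomputable def eRho (X : Finset (Finset V)) (k : ℕ) (ρ : Finset V) :
    EuclideanSpace ℝ (Finset V) :=
  (WithLp.equiv 2 (Finset V → ℝ)).symm (fun τ => if τ ∈ faces X k then incidence τ ρ else 0)

/-- the span of the coboundary generators. -/
noncomputable def Usub (X : Finset (Finset V)) (k : ℕ) :
    Submodule ℝ (EuclideanSpace ℝ (Finset V)) :=
  Submodule.span ℝ (Set.range (eRho X k))

noncomputable def zvec (X : Finset (Finset V)) (k : ℕ) (g : Finset V → ℝ) :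
    EuclideanSpace ℝ (Finset V) :=
  (WithLp.equiv 2 (Finset V → ℝ)).symm g
    - (Submodule.orthogonalProjection (Usub X k) ((WithLp.equiv 2 (Finset V → ℝ)).symm g) :
        EuclideanSpace ℝ (Finset V))

noncomputable def fvec (X : Finset (Finset V)) (k : ℕ) (g : Finset V → ℝ) :
    Finset V → ℝ :=
  WithLp.equiv 2 (Finset V → ℝ) (zvec X k g)

lemma inner_euc (x y : EuclideanSpace ℝ (Finset V)) :
    (inner ℝ x y : ℝ) = ∑ τ : Finset V, x τ * y τ := by
  rw [PiLp.inner_apply]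
  simp [RCLike.inner_apply, conj_trivial, mul_comm]

lemma inner_eRho (X : Finset (Finset V)) (k : ℕ) (ρ : Finset V)
    (x : EuclideanSpace ℝ (Finset V)) :
    (inner ℝ (eRho X k ρ) x : ℝ) = ∑ τ ∈ faces X k, incidence τ ρ * x τ := by
  rw [inner_euc]
  rw [show (∑ τ : Finset V, eRho X k ρ τ * x τ)
      = ∑ τ : Finset V, if τ ∈ faces X k then incidence τ ρ * x τ else 0 from
    Finset.sum_congr rfl fun τ _ => by
      by_cases h : τ ∈ faces X k <;> simp [eRho, h, WithLp.equiv_symm_apply, PiLp.toLp_apply]]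
  rw [Finset.sum_ite_mem, Finset.univ_inter]

lemma zvec_mem_orth (X : Finset (Finset V)) (k : ℕ) (g : Finset V → ℝ) :
    zvec X k g ∈ (Usub X k)ᗮ :=
  Submodule.sub_starProjection_mem_orthogonal _

lemma fvec_apply (X : Finset (Finset V)) (k : ℕ) (g : Finset V → ℝ) (τ : Finset V) :
    fvec X k g τ = zvec X k g τ := rfl

lemma bdry_fvec (X : Finset (Finset V)) (k : ℕ) (g : Finset V → ℝ) :
    IsCycle X k (fvec X k g) := by
  intro ρ
  have h := (Submodule.mem_orthogonal (Usub X k) (zvec X k g)).mp (zvec_mem_orth X k g)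
    (eRho X k ρ) (Submodule.subset_span (Set.mem_range_self ρ))
  rw [inner_eRho] at h
  unfold bdry
  rw [← h]
  exact Finset.sum_congr rfl fun τ _ => by rw [fvec_apply]

/-- `⟪w_τ, x⟫ = 0` for every `x` in the span, where `w_τ` is the incidence row of `τ`. -/
lemma inner_row_span_zero (X : Finset (Finset V)) (k : ℕ) {τ : Finset V}
    (hτc : τ.card = k + 1) (hfac : ∀ v ∈ τ, τ.erase v ∈ X)
    {x : EuclideanSpace ℝ (Finset V)} (hx : x ∈ Usub X k) :
    ∑ σ ∈ faces X k, incidence τ σ * x σ = 0 := by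
  induction hx using Submodule.span_induction with
  | mem y hy =>
      obtain ⟨ρ, rfl⟩ := hy
      have : ∀ σ ∈ faces X k, incidence τ σ * eRho X k ρ σ
          = incidence τ σ * incidence σ ρ := by
        intro σ hσ
        congr 1
        simp [eRho, hσ, WithLp.equiv_symm_apply, PiLp.toLp_apply]
      rw [Finset.sum_congr rfl this, sum_faces_eq_sum_erase X _ hτc hfac]
      exact dd0 τ ρ
  | zero => simp
  | add y z _ _ hy hz =>
      have h : ∀ σ ∈ faces X k, incidence τ σ * (y + z) σ
          = incidence τ σ * y σ + incidence τ σ * z σ :=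
        fun σ _ => by rw [show (y + z) σ = y σ + z σ from rfl]; ring
      rw [Finset.sum_congr rfl h, Finset.sum_add_distrib, hy, hz, add_zero]
  | smul c y _ hy =>
      have h : ∀ σ ∈ faces X k, incidence τ σ * (c • y) σ = c * (incidence τ σ * y σ) :=
        fun σ _ => by rw [show (c • y) σ = c * y σ from rfl]; ring
      rw [Finset.sum_congr rfl h, ← Finset.mul_sum, hy, mul_zero]

lemma delta_fvec (X : Finset (Finset V)) (k : ℕ) (g : Finset V → ℝ) {τ : Finset V}
    (hτc : τ.card = k + 1) (hfac : ∀ v ∈ τ, τ.erase v ∈ X) :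
    delta X k (fvec X k g) τ = delta X k g τ := by
  have hb : ((WithLp.equiv 2 (Finset V → ℝ)).symm g - zvec X k g) ∈ Usub X k := by
    rw [zvec, sub_sub_cancel]
    exact SetLike.coe_mem _
  have h0 := inner_row_span_zero X k hτc hfac hb
  unfold delta
  have : ∀ σ ∈ faces X k,
      incidence τ σ * ((WithLp.equiv 2 (Finset V → ℝ)).symm g - zvec X k g) σ
        = incidence τ σ * g σ - incidence τ σ * fvec X k g σ := by
    intro σ _
    rw [show ((WithLp.equiv 2 (Finset V → ℝ)).symm g - zvec X k g) σ
        = g σ - zvec X k g σ from rfl, fvec_apply]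
    ring
  rw [Finset.sum_congr rfl this, Finset.sum_sub_distrib] at h0
  linarith [h0]

end Proj
section Key
set_option linter.unusedSectionVars false
set_option maxHeartbeats 2000000

variable {V : Type*} [DecidableEq V] [Fintype V] [LinearOrder V]

lemma inn_lapUp_eq (X : Finset (Finset V)) (k : ℕ) (f : Finset V → ℝ) :
    inn X k (lapUp X k f) f = inn X (k+1) (delta X k f) (delta X k f) := by
  unfold inn lapUp bdry
  simp only [Finset.sum_mul]
  rw [Finset.sum_comm]
  apply Finset.sum_congr rfl
  intro τ _
  calc ∑ σ ∈ faces X k, incidence τ σ * delta X k f τ * f σ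
      = delta X k f τ * ∑ σ ∈ faces X k, incidence τ σ * f σ := by
        rw [Finset.mul_sum]; exact Finset.sum_congr rfl fun σ _ => by ring
    _ = delta X k f τ * delta X k f τ := rfl

lemma erase_inj_on (τ : Finset V) :
    ∀ v ∈ τ, ∀ w ∈ τ, τ.erase v = τ.erase w → v = w := by
  intro v hv w hw h
  by_contra hne
  have : v ∈ τ.erase w := Finset.mem_erase.mpr ⟨hne, hv⟩
  rw [← h] at this
  exact (Finset.mem_erase.mp this).1 rfl

lemma miss_singleton (p : V → ℕ) {k : ℕ} (hp : ∀ x : V, p x < k + 1) {τ : Finset V}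
    (hτ : τ.card = k + 1) (himg : (τ.image p).card = k + 1) {v : V} (hv : v ∈ τ) :
    Finset.range (k+1) \ (τ.erase v).image p = {p v} := by
  have hinj : Set.InjOn p ↑τ := by rw [← Finset.card_image_iff, himg, hτ]
  have hrange : τ.image p = Finset.range (k+1) := image_eq_range p hp himg
  have him_e : (τ.erase v).image p = (Finset.range (k+1)).erase (p v) := by
    rw [image_erase_injOn p hinj hv, hrange]
  rw [him_e]
  ext x
  simp only [Finset.mem_sdiff, Finset.mem_erase, Finset.mem_singleton, Finset.mem_range]
  constructor
  · rintro ⟨h1, h2⟩; by_contra hne; exact h2 ⟨hne, h1⟩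
  · rintro rfl; exact ⟨hp v, fun h => h.1 rfl⟩

lemma key_est (X : Finset (Finset V)) (k : ℕ) (hX : IsComplex X)
    (A : Fin (k+1) → Finset V) (hA : IsPartition A) (hFne : (Fpar X k A).Nonempty) :
    ∃ f : Finset V → ℝ, IsCycle X k f ∧ inn X k f f ≠ 0 ∧
      inn X k (lapUp X k f) f / inn X k f f
        ≤ (Fintype.card V * (Fset X k A).card : ℝ) / ((Fpar X k A).card : ℝ) := by
  classical
  have hex : ∀ v : V, ∃ i, v ∈ A i ∧ ∀ j, v ∈ A j → j = i := fun v => hA.2 v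
  choose pt hpt hptu using hex
  have hmem : ∀ v i, v ∈ A i ↔ pt v = i := fun v i =>
    ⟨fun h => (hptu v i h).symm, fun h => by rw [← h]; exact hpt v⟩
  set p : V → ℕ := fun v => (pt v : ℕ) with hpdef
  have hp : ∀ x : V, p x < k + 1 := fun x => (pt x).isLt
  set a : ℕ → ℝ := fun m => if h : m < k + 1 then ((A ⟨m, h⟩).card : ℝ) else 0 with hadef
  have hapos : ∀ m, m < k + 1 → 0 < a m := by
    intro m hm
    simp only [hadef, dif_pos hm]
    exact_mod_cast Finset.card_pos.mpr (hA.1 ⟨m, hm⟩)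
  have hapv : ∀ v : V, a (p v) = ((A (pt v)).card : ℝ) := by
    intro v
    simp only [hadef, hpdef, dif_pos (pt v).isLt, Fin.eta]
  -- V is nonempty
  have hVne : Nonempty V := by
    obtain ⟨τ, hτ⟩ := hFne
    have hc := (Finset.mem_filter.mp (Finset.mem_filter.mp hτ).1).2
    have : τ.Nonempty := Finset.card_pos.mp (by rw [hc]; omega)
    exact ⟨this.choose⟩
  have hn : (0 : ℝ) < (Fintype.card V : ℝ) := by
    exact_mod_cast Fintype.card_pos
  set n : ℝ := (Fintype.card V : ℝ) with hndef
  -- total count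
  have hsuma : ∑ m ∈ Finset.range (k+1), a m = n := by
    rw [← Fin.sum_univ_eq_sum_range]
    have h1 : ∀ i : Fin (k+1), i ∈ Finset.univ → a (i : ℕ) = ((A i).card : ℝ) := by
      intro i _
      simp only [hadef, dif_pos i.isLt, Fin.eta]
    rw [Finset.sum_congr rfl h1, hndef, ← Nat.cast_sum]
    congr 1
    have hcover : Finset.univ.biUnion A = Finset.univ := by
      ext v
      simp only [Finset.mem_biUnion, Finset.mem_univ, iff_true, true_and]
      exact ⟨pt v, hpt v⟩
    have hdisj : ∀ i ∈ Finset.univ, ∀ j ∈ Finset.univ, i ≠ j →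
        Disjoint (A i) (A (j : Fin (k+1))) := by
      intro i _ j _ hij
      rw [Finset.disjoint_left]
      intro v hvi hvj
      exact hij (((hmem v i).mp hvi).symm.trans ((hmem v j).mp hvj))
    rw [← Finset.card_biUnion hdisj, hcover]
    rfl
  -- color equivalence
  have hcolor : ∀ τ : Finset V, τ.card = k + 1 →
      ((∀ i, (τ ∩ A i).card = 1) ↔ (τ.image p).card = k + 1) := by
    intro τ hτ
    have hfilt : ∀ i, τ ∩ A i = τ.filter fun x => pt x = i := by
      intro i
      ext x
      simp only [Finset.mem_inter, Finset.mem_filter, hmem]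
    constructor
    · intro h
      have hinj : Set.InjOn p ↑τ := by
        intro x hx y hy hxy
        have hpt' : pt x = pt y := Fin.val_injective hxy
        have h1 := Finset.card_le_one.mp (le_of_eq (h (pt x)))
        exact h1 x (Finset.mem_inter.mpr ⟨hx, (hmem x _).mpr rfl⟩)
          y (Finset.mem_inter.mpr ⟨hy, (hmem y _).mpr hpt'.symm⟩)
      rw [Finset.card_image_iff.mpr hinj, hτ]
    · intro himg
      have hinj : Set.InjOn p ↑τ := by rw [← Finset.card_image_iff, himg, hτ]
      intro i
      have hle : (τ ∩ A i).card ≤ 1 := by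
        rw [hfilt]
        apply Finset.card_le_one.mpr
        intro x hx y hy
        have hx' := Finset.mem_filter.mp hx
        have hy' := Finset.mem_filter.mp hy
        exact hinj (Finset.mem_coe.mpr hx'.1) (Finset.mem_coe.mpr hy'.1)
          (by rw [hpdef]; simp only [hx'.2, hy'.2])
      have hge : 1 ≤ (τ ∩ A i).card := by
        have hrange : τ.image p = Finset.range (k+1) := image_eq_range p hp himg
        have : (i : ℕ) ∈ τ.image p := by
          rw [hrange, Finset.mem_range]; exact i.isLt
        obtain ⟨v, hv, hpv⟩ := Finset.mem_image.mp this
        refine Finset.card_pos.mpr ⟨v, ?_⟩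
        rw [hfilt]
        exact Finset.mem_filter.mpr ⟨hv, Fin.val_injective hpv⟩
      omega
  -- face hypotheses
  have hCof : ∀ τ ∈ faces X (k+1), τ.card = k+1 ∧ ∀ v ∈ τ, τ.erase v ∈ X := by
    intro τ hτ
    obtain ⟨hτX, hτc⟩ := Finset.mem_filter.mp hτ
    exact ⟨hτc, fun v _ => hX τ hτX _ (Finset.erase_subset _ _)⟩
  have hCop : ∀ τ ∈ faces (completion X k) (k+1),
      τ.card = k+1 ∧ ∀ v ∈ τ, τ.erase v ∈ X := by
    intro τ hτ
    obtain ⟨hτK, hτc⟩ := Finset.mem_filter.mp hτ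
    refine ⟨hτc, ?_⟩
    rcases Finset.mem_union.mp hτK with h | h
    · exact fun v _ => hX τ h _ (Finset.erase_subset _ _)
    · exact (Finset.mem_filter.mp h).2.2
  -- the test cochain and its projection
  set g : Finset V → ℝ := gfun p a k with hgdef
  set f : Finset V → ℝ := fvec X k g with hfdef
  have hcyc : IsCycle X k f := bdry_fvec X k g
  have hdf : ∀ τ : Finset V, τ.card = k + 1 → (∀ v ∈ τ, τ.erase v ∈ X) →
      delta X k f τ = if (τ.image p).card = k+1
        then (-1:ℝ)^(invCount p τ) * n else 0 := by
    intro τ h1 h2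
    rw [hfdef, delta_fvec X k g h1 h2, hgdef]
    unfold delta
    rw [sum_faces_eq_sum_erase X _ h1 h2, L4 p a k hp h1, hsuma]
  -- numerator
  have hnum : inn X k (lapUp X k f) f = n^2 * ((Fset X k A).card : ℝ) := by
    rw [inn_lapUp_eq]
    unfold inn
    have h1 : ∀ τ ∈ faces X (k+1), delta X k f τ * delta X k f τ
        = if (∀ i, (τ ∩ A i).card = 1) then n^2 else 0 := by
      intro τ hτ
      obtain ⟨hc, hfac⟩ := hCof τ hτ
      rw [hdf τ hc hfac]
      by_cases hcol : ∀ i, (τ ∩ A i).card = 1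
      · rw [if_pos ((hcolor τ hc).mp hcol), if_pos hcol,
          show ((-1:ℝ)^(invCount p τ) * n) * ((-1:ℝ)^(invCount p τ) * n)
            = ((-1:ℝ)^(invCount p τ) * (-1:ℝ)^(invCount p τ)) * n^2 from by ring,
          ← pow_add, ← two_mul, pow_mul, neg_one_sq, one_pow, one_mul]
      · rw [if_neg (fun hcon => hcol ((hcolor τ hc).mpr hcon)), if_neg hcol, mul_zero]
    rw [Finset.sum_congr rfl h1, Finset.sum_ite, Finset.sum_const, Finset.sum_const_zero,
      add_zero, nsmul_eq_mul]
    rw [show Fset X k A = (faces X (k+1)).filter (fun τ => ∀ i, (τ ∩ A i).card = 1) from rfl]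
    ring
  -- weight function
  set q : Finset V → ℝ :=
    fun σ => (f σ)^2 / (∑ m ∈ Finset.range (k+1) \ σ.image p, a m) with hqdef
  have hFparFacts : ∀ τ ∈ Fpar X k A,
      τ.card = k+1 ∧ (∀ v ∈ τ, τ.erase v ∈ X) ∧ (τ.image p).card = k+1 := by
    intro τ hτ
    obtain ⟨hτf, hτcol⟩ := Finset.mem_filter.mp hτ
    obtain ⟨hc, hfac⟩ := hCop τ hτf
    exact ⟨hc, hfac, (hcolor τ hc).mp hτcol⟩
  have hqv : ∀ τ ∈ Fpar X k A, ∀ v ∈ τ, q (τ.erase v) = (f (τ.erase v))^2 / a (p v) := by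
    intro τ hτ v hv
    obtain ⟨hc, _, hcol⟩ := hFparFacts τ hτ
    rw [hqdef]
    simp only
    rw [miss_singleton p hp hc hcol hv, Finset.sum_singleton]
  -- step 1 : per-face Cauchy-Schwarz
  have hstep : ∀ τ ∈ Fpar X k A, n ≤ ∑ v ∈ τ, q (τ.erase v) := by
    intro τ hτ
    obtain ⟨hc, hfac, hcol⟩ := hFparFacts τ hτ
    have hδ : ∑ v ∈ τ, incidence τ (τ.erase v) * f (τ.erase v)
        = (-1:ℝ)^(invCount p τ) * n := by
      have h1 := hdf τ hc hfac
      unfold delta at h1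
      rw [sum_faces_eq_sum_erase X _ hc hfac] at h1
      rw [h1, if_pos hcol]
    have hinj : Set.InjOn p ↑τ := by rw [← Finset.card_image_iff, hcol, hc]
    have hW : ∑ v ∈ τ, a (p v) = n := by
      rw [show (∑ v ∈ τ, a (p v)) = ∑ m ∈ τ.image p, a m from
          (Finset.sum_image (fun x hx y hy h =>
            hinj (Finset.mem_coe.mpr hx) (Finset.mem_coe.mpr hy) h)).symm,
        image_eq_range p hp hcol, hsuma]
    have hCS := Finset.sq_sum_div_le_sum_sq_div τ
      (fun v => incidence τ (τ.erase v) * f (τ.erase v))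
      (g := fun v => a (p v)) (fun v _ => hapos _ (hp v))
    rw [hδ, hW] at hCS
    have hsq : ((-1:ℝ)^(invCount p τ) * n)^2 = n^2 := by
      rw [mul_pow, ← pow_mul, mul_comm (invCount p τ) 2, pow_mul, neg_one_sq, one_pow, one_mul]
    rw [hsq] at hCS
    have hterm : ∀ v ∈ τ, (incidence τ (τ.erase v) * f (τ.erase v))^2 / a (p v)
        = q (τ.erase v) := by
      intro v hv
      rw [mul_pow, show (incidence τ (τ.erase v))^2 = 1 from by
        rw [sq]; exact incidence_erase_sq hv, one_mul, hqv τ hτ v hv]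
    rw [Finset.sum_congr rfl hterm] at hCS
    calc n = n^2 / n := by field_simp
      _ ≤ ∑ v ∈ τ, q (τ.erase v) := hCS
  -- step 2 : double counting
  have hswap : ∑ τ ∈ Fpar X k A, ∑ v ∈ τ, q (τ.erase v)
      ≤ ∑ σ ∈ faces X k, (f σ)^2 := by
    have h1 : ∀ τ ∈ Fpar X k A, ∑ v ∈ τ, q (τ.erase v)
        = ∑ σ ∈ faces X k, (if σ ∈ τ.image (fun v => τ.erase v) then q σ else 0) := by
      intro τ hτ
      obtain ⟨hc, hfac, hcol⟩ := hFparFacts τ hτ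
      have hsub : τ.image (fun v => τ.erase v) ⊆ faces X k := by
        intro σ hσ
        obtain ⟨v, hv, rfl⟩ := Finset.mem_image.mp hσ
        have hcard : (τ.erase v).card = k := by rw [Finset.card_erase_of_mem hv, hc]; omega
        exact Finset.mem_filter.mpr ⟨hfac v hv, hcard⟩
      symm
      rw [Finset.sum_ite_mem, Finset.inter_eq_right.mpr hsub]
      exact Finset.sum_image (erase_inj_on τ)
    rw [Finset.sum_congr rfl h1, Finset.sum_comm]
    apply Finset.sum_le_sum
    intro σ hσ
    rw [Finset.sum_ite, Finset.sum_const, Finset.sum_const_zero, add_zero, nsmul_eq_mul]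
    set s := (Fpar X k A).filter (fun τ => σ ∈ τ.image (fun v => τ.erase v)) with hsdef
    rcases Finset.eq_empty_or_nonempty s with hse | hsne
    · rw [hse]
      simp [sq_nonneg]
    · obtain ⟨τ0, hτ0⟩ := hsne
      obtain ⟨hτ0F, hτ0σ⟩ := Finset.mem_filter.mp hτ0
      obtain ⟨v0, hv0, hv0e⟩ := Finset.mem_image.mp hτ0σ
      have hq0 : q σ = f σ^2 / a (p v0) := by rw [← hv0e]; exact hqv τ0 hτ0F v0 hv0
      have hsubA : s ⊆ (A (pt v0)).image (fun u => insert u σ) := by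
        intro τ' hτ'
        obtain ⟨hτ'F, hτ'σ⟩ := Finset.mem_filter.mp hτ'
        obtain ⟨u, hu, hue⟩ := Finset.mem_image.mp hτ'σ
        obtain ⟨hc', hfac', hcol'⟩ := hFparFacts τ' hτ'F
        obtain ⟨hc0, hfac0, hcol0⟩ := hFparFacts τ0 hτ0F
        have h1' := miss_singleton p hp hc' hcol' hu
        have h2' := miss_singleton p hp hc0 hcol0 hv0
        rw [hue] at h1'
        rw [hv0e] at h2'
        have hpe : p u = p v0 := Finset.singleton_inj.mp (h1'.symm.trans h2')
        have hptuv : pt u = pt v0 := Fin.val_injective hpe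
        refine Finset.mem_image.mpr ⟨u, ?_, ?_⟩
        · rw [← hptuv]; exact hpt u
        · rw [← hue, Finset.insert_erase hu]
      have hcard : (s.card : ℝ) ≤ a (p v0) := by
        rw [hapv v0]
        exact_mod_cast le_trans (Finset.card_le_card hsubA) Finset.card_image_le
      have hqnn : 0 ≤ q σ := by
        rw [hq0]
        exact div_nonneg (sq_nonneg _) (hapos _ (hp v0)).le
      calc (s.card : ℝ) * q σ ≤ a (p v0) * q σ := mul_le_mul_of_nonneg_right hcard hqnn
        _ = f σ^2 := by rw [hq0, mul_comm, div_mul_cancel₀ _ (hapos _ (hp v0)).ne']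
  -- denominator bound
  have hinn : inn X k f f = ∑ σ ∈ faces X k, (f σ)^2 := by
    unfold inn
    exact Finset.sum_congr rfl fun σ _ => (sq (f σ)).symm
  have hden : n * ((Fpar X k A).card : ℝ) ≤ inn X k f f := by
    rw [hinn]
    calc n * ((Fpar X k A).card : ℝ) = ∑ _τ ∈ Fpar X k A, n := by
          rw [Finset.sum_const, nsmul_eq_mul]; ring
      _ ≤ ∑ τ ∈ Fpar X k A, ∑ v ∈ τ, q (τ.erase v) := Finset.sum_le_sum hstep
      _ ≤ ∑ σ ∈ faces X k, (f σ)^2 := hswap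
  have hFpos : (0:ℝ) < ((Fpar X k A).card : ℝ) := by
    exact_mod_cast Finset.card_pos.mpr hFne
  have hdenpos : 0 < inn X k f f := lt_of_lt_of_le (mul_pos hn hFpos) hden
  refine ⟨f, hcyc, ne_of_gt hdenpos, ?_⟩
  rw [hnum]
  calc n^2 * ((Fset X k A).card : ℝ) / inn X k f f
      ≤ n^2 * ((Fset X k A).card : ℝ) / (n * ((Fpar X k A).card : ℝ)) := by
        exact div_le_div_of_nonneg_left (by positivity) (mul_pos hn hFpos) hden
      _ = (Fintype.card V * (Fset X k A).card : ℝ) / ((Fpar X k A).card : ℝ) := by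
        rw [hndef]
        field_simp
end Key

/-- For **any** `k`-dimensional simplicial complex `X` (with not necessarily complete
`(k-1)`-skeleton) with `Z_{k-1}(X;ℝ) ≠ 0`, one has `λ(X) ≤ h(X)`. -/
theorem spectralGap_le_cheeger
    {V : Type*} [DecidableEq V] [Fintype V] [LinearOrder V]
    (X : Finset (Finset V)) (k : ℕ)
    (hX : IsComplex X) (hdim : IsDim X k)
    (hZ : ∃ f : Finset V → ℝ, IsCycle X k f ∧ inn X k f f ≠ 0) :
    (spectralGap X k : EReal) ≤ cheeger X k := by
  rw [cheeger]
  apply le_sInf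
  rintro r ⟨A, hA, rfl⟩
  rw [cheegerVal]
  by_cases hF : (Fpar X k A).card = 0
  · rw [if_pos hF]
    exact le_top
  · rw [if_neg hF]
    have hFne : (Fpar X k A).Nonempty := Finset.card_pos.mp (Nat.pos_of_ne_zero hF)
    obtain ⟨f, hfc, hfnn, hfle⟩ := key_est X k hX A hA hFne
    rw [EReal.coe_le_coe_iff]
    have hbdd : BddBelow {r : ℝ | ∃ f : Finset V → ℝ, IsCycle X k f ∧ inn X k f f ≠ 0 ∧
        r = inn X k (lapUp X k f) f / inn X k f f} := by
      refine ⟨0, ?_⟩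
      rintro r' ⟨f', _, hnn', rfl⟩
      have hnum : 0 ≤ inn X k (lapUp X k f') f' := by
        rw [inn_lapUp_eq]
        unfold inn
        exact Finset.sum_nonneg fun τ _ => mul_self_nonneg _
      have hden : 0 ≤ inn X k f' f' := by
        unfold inn
        exact Finset.sum_nonneg fun σ _ => mul_self_nonneg _
      exact div_nonneg hnum hden
    have hmem : inn X k (lapUp X k f) f / inn X k f f ∈
        {r : ℝ | ∃ f : Finset V → ℝ, IsCycle X k f ∧ inn X k f f ≠ 0 ∧
          r = inn X k (lapUp X k f) f / inn X k f f} := ⟨f, hfc, hfnn, rfl⟩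
    exact le_trans (csInf_le hbdd hmem) hfle

end HigherCheeger
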